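/- arXiv:2011.05376 — 2 statements merged into one kernel-verified Lean document; each statement's English description precedes it below -/
import Mathlib

section
/- If M is a consistent positive n×n matrix and w is the positive vector given by w_i = M_i0, then for any vector v with M.mulVec v = n • v, v is a scalar multiple of w. -/
theorem stmt15 (n : ℕ) (hn : 0 < n) (M : Matrix (Fin n) (Fin n) ℝ)
    (hpos : ∀ i j, 0 < M i j) (hcons : ∀ i j k, M i j = M i k * M k j)
    (w : Fin n → ℝ) (hw : ∀ i, w i = M i ⟨0, hn⟩) :
    ∀ v : Fin n → ℝ, M.mulVec v = (n : ℝ) • v → ∃ c : ℝ, v = c • w := by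
  intro v hv
  have hnne : (n : ℝ) ≠ 0 := Nat.cast_ne_zero.mpr hn.ne'
  have key : ∀ i, (n : ℝ) * v i = M i ⟨0, hn⟩ * ∑ j, M ⟨0, hn⟩ j * v j := by
    intro i
    have h1 : (n : ℝ) * v i = ∑ j, M i j * v j := by
      have := congrFun hv i
      simp [Matrix.mulVec, dotProduct, Pi.smul_apply] at this
      linarith [this]
    rw [h1, Finset.mul_sum]
    apply Finset.sum_congr rfl
    intro j _
    rw [hcons i j ⟨0, hn⟩, mul_assoc]
  refine ⟨(∑ j, M ⟨0, hn⟩ j * v j) / n, ?_⟩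
  funext i
  simp only [Pi.smul_apply, smul_eq_mul, hw i]
  field_simp
  linarith [key i]
end

section
/- For a consistent positive n×n matrix M (n ≥ 1), the characteristic polynomial of M equals X^(n-1) * (X - n). -/
open Polynomial Matrix

lemma myEvalCharpoly {n : ℕ} (M : Matrix (Fin n) (Fin n) ℝ) (x : ℝ) :
    M.charpoly.eval x = (x • (1 : Matrix (Fin n) (Fin n) ℝ) - M).det := by
  rw [Matrix.charpoly, ← Polynomial.coe_evalRingHom, RingHom.map_det]
  congr 1
  ext i j
  by_cases h : i = j <;>
    simp [h, Matrix.charmatrix_apply, Matrix.one_apply, Matrix.diagonal_apply]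

theorem stmt17 (n : ℕ) (hn : 1 ≤ n) (M : Matrix (Fin n) (Fin n) ℝ)
    (hpos : ∀ i j, 0 < M i j) (hcons : ∀ i j k, M i j = M i k * M k j) :
    M.charpoly = Polynomial.X ^ (n - 1) * (Polynomial.X - Polynomial.C (n : ℝ)) := by
  have hn0 : 0 < n := hn
  haveI : NeZero n := ⟨hn0.ne'⟩
  set z : Fin n := ⟨0, hn0⟩
  have hdiag : ∀ i, M i i = 1 := by
    intro i
    have h := hcons i i i
    nlinarith [hpos i i]
  set u : Fin n → ℝ := fun i => M i z with hu
  set v : Fin n → ℝ := fun j => M z j with hv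
  have hM : ∀ i j, M i j = u i * v j := fun i j => hcons i j z
  have hvu : ∀ j, v j * u j = 1 := by
    intro j
    have h := hcons z z j
    rw [hdiag z] at h
    rw [hv, hu]
    linarith
  apply Polynomial.eq_of_infinite_eval_eq
  apply Set.Infinite.mono (s := {x : ℝ | x ≠ 0})
  · intro x hx
    have hx : x ≠ 0 := hx
    simp only [Set.mem_setOf_eq]
    rw [myEvalCharpoly]
    set w : Fin n → ℝ := fun i => -(x⁻¹ * u i) with hw
    have key : x • (1 : Matrix (Fin n) (Fin n) ℝ) - M
        = x • (1 + Matrix.replicateCol Unit w * Matrix.replicateRow Unit v) := by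
      ext i j
      simp only [Matrix.sub_apply, Matrix.smul_apply, Matrix.add_apply, Matrix.mul_apply,
        Matrix.replicateCol_apply, Matrix.replicateRow_apply, Finset.univ_unique, Finset.sum_singleton,
        smul_eq_mul, hM i j, hw]
      field_simp
      ring
    rw [key, Matrix.det_smul, Matrix.det_one_add_replicateCol_mul_replicateRow]
    have hdot : v ⬝ᵥ w = -(x⁻¹ * (n : ℝ)) := by
      simp only [dotProduct, hw, mul_neg, Finset.sum_neg_distrib]
      rw [Finset.sum_congr rfl (fun j _ => by rw [mul_comm x⁻¹ (u j), ← mul_assoc, hvu j, one_mul])]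
      simp [mul_comm]
    rw [hdot]
    have hcard : Fintype.card (Fin n) = n := Fintype.card_fin n
    rw [hcard]
    rw [Polynomial.eval_mul, Polynomial.eval_pow, Polynomial.eval_sub, Polynomial.eval_X,
      Polynomial.eval_C]
    have hpow : x ^ n = x ^ (n - 1) * x := by
      conv_lhs => rw [show n = (n - 1) + 1 from (Nat.succ_pred_eq_of_pos hn0).symm]
      rw [pow_succ]
    rw [hpow]
    field_simp
    ring
  · have : {x : ℝ | x ≠ 0} = ({0} : Set ℝ)ᶜ := rfl
    rw [this]
    exact Set.Finite.infinite_compl (Set.finite_singleton 0)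
end
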